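/- Let T₁ and T₂ be reduction operators relative to (G,<) with ker(T₂) ⊆ ker(T₁). Then every T₁-normal form is a T₂-normal form, i.e. {g ∈ G : T₁(g) = g} ⊆ {g ∈ G : T₂(g) = g}. -/
import Mathlib


open Finsupp

variable {K G : Type*} [Field K] [LinearOrder G] [WellFoundedLT G]

/-- `T` is a reduction operator relative to `(G, <)`. -/
def IsRedOp (T : (G →₀ K) →ₗ[K] (G →₀ K)) : Prop :=
  T ∘ₗ T = T ∧
    ∀ g : G, T (single g 1) = single g 1 ∨ (T (single g 1)).support.max < (g : WithBot G)

lemma redop_support_lt (T : (G →₀ K) →ₗ[K] (G →₀ K)) (hT : IsRedOp T) (g : G)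
    (y : G →₀ K) (hy : ∀ a ∈ y.support, a < g) : ∀ a ∈ (T y).support, a < g := by
  have hmem : y ∈ Finsupp.supported K K {a : G | a < g} := by
    rw [Finsupp.mem_supported]; exact fun a ha => hy a ha
  rw [Finsupp.supported_eq_span_single] at hmem
  have : T y ∈ Finsupp.supported K K {a : G | a < g} := by
    rw [Finsupp.supported_eq_span_single]
    refine Submodule.span_induction (p := fun z _ =>
      T z ∈ Submodule.span K ((fun i => single i (1 : K)) '' {a : G | a < g})) ?_ ?_ ?_ ?_ hmem
    · rintro z ⟨b, hb, rfl⟩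
      rcases hT.2 b with h' | h'
      · rw [h']
        exact Submodule.subset_span ⟨b, hb, rfl⟩
      · rw [← Finsupp.supported_eq_span_single, Finsupp.mem_supported]
        intro a ha
        have hab : (a : WithBot G) ≤ (T (single b 1)).support.max := Finset.le_max ha
        have : (a : WithBot G) < (b : WithBot G) := lt_of_le_of_lt hab h'
        exact lt_of_lt_of_le (WithBot.coe_lt_coe.mp this) (le_of_lt hb)
    · simp
    · intro x z _ _ hx hz
      rw [map_add]; exact Submodule.add_mem _ hx hz
    · intro c x _ hx
      rw [map_smul]; exact Submodule.smul_mem _ c hx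
  rw [Finsupp.mem_supported] at this
  exact fun a ha => this ha

/-- If `ker T₂ ⊆ ker T₁` (i.e. `T₁ ⪯ T₂`), then every `T₁`-normal form is a `T₂`-normal form. -/
theorem normal_forms_mono (T₁ T₂ : (G →₀ K) →ₗ[K] (G →₀ K))
    (h₁ : IsRedOp T₁) (h₂ : IsRedOp T₂)
    (h : LinearMap.ker T₂ ≤ LinearMap.ker T₁) :
    {g : G | T₁ (single g 1) = single g 1} ⊆ {g : G | T₂ (single g 1) = single g 1} := by
  intro g hg
  simp only [Set.mem_setOf_eq] at hg ⊢
  rcases h₂.2 g with h' | h'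
  · exact h'
  · exfalso
    -- single g 1 - T₂ (single g 1) ∈ ker T₂ ⊆ ker T₁
    have hk : single g 1 - T₂ (single g 1) ∈ LinearMap.ker T₂ := by
      rw [LinearMap.mem_ker, map_sub, ← LinearMap.comp_apply, h₂.1, sub_self]
    have hk1 : T₁ (single g 1 - T₂ (single g 1)) = 0 := h hk
    rw [map_sub, hg, sub_eq_zero] at hk1
    -- so single g 1 = T₁ (T₂ (single g 1)), but support of RHS is < g
    have hsupp : ∀ a ∈ (T₂ (single g 1)).support, a < g := by
      intro a ha
      have : (a : WithBot G) ≤ (T₂ (single g 1)).support.max := Finset.le_max ha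
      exact WithBot.coe_lt_coe.mp (lt_of_le_of_lt this h')
    have := redop_support_lt T₁ h₁ g _ hsupp
    have hg' : g ∈ (single g (1 : K)).support := by
      simp [Finsupp.support_single_ne_zero]
    rw [hk1] at hg'
    exact lt_irrefl g (this g hg')
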